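/- Let a, b, c, v be real constants with a > 0, b > 0, v > 0, let π : (0, ∞) → ℝ be continuous and f : [0, ∞) → ℝ be continuous. With C(t, s) := (1 − s·a·b^(−2v)·Γ(2v, bt)·e^(bt)) / (s·e^(bt)), A(t, s) := s·e^(bt) / (1 − s·e^(bt)·a·b^(−2v)·(Γ(2v, bt) − Γ(2v))), G(t; C) := ∫_0^t c / (a·b^(−2v)·Γ(2v, bμ)·e^(bμ) + e^(bμ)·C) dμ, and ω(t, s) := e^(−G(t; C(t,s)))·π(A(t, s)) + e^(−G(t; C(t,s)))·∫_0^t f(τ)·e^(G(τ; C(t,s))) dτ, one has, for every fixed s > 0, the initial condition lim_{t → 0⁺} ω(t, s) = π(s). -/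

import Mathlib

open Real MeasureTheory intervalIntegral

/-- The upper incomplete gamma function `Γ(q, p) = ∫_p^∞ x^(q−1) e^(−x) dx`;
`upperGamma q 0` is the usual gamma function `Γ(q)`. -/
noncomputable def upperGamma (q p : ℝ) : ℝ := ∫ x in Set.Ioi p, x ^ (q - 1) * Real.exp (-x)

/-- The denominator `a·b^(−2v)·Γ(2v, bμ)·e^(bμ) + e^(bμ)·C`. -/
noncomputable def Dfun (a b v C μ : ℝ) : ℝ :=
  a * b ^ (-(2 * v)) * upperGamma (2 * v) (b * μ) * Real.exp (b * μ) + Real.exp (b * μ) * C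

/-- `G(t; C) = ∫_0^t c / (a·b^(−2v)·Γ(2v, bμ)·e^(bμ) + e^(bμ)·C) dμ`. -/
noncomputable def Gfun (a b c v C t : ℝ) : ℝ :=
  ∫ μ in (0 : ℝ)..t, c / Dfun a b v C μ

/-- The characteristic constant `C(t, s) = (1 − s·a·b^(−2v)·Γ(2v, bt)·e^(bt)) / (s·e^(bt))`. -/
noncomputable def Cfun (a b v t s : ℝ) : ℝ :=
  (1 - s * a * b ^ (-(2 * v)) * upperGamma (2 * v) (b * t) * Real.exp (b * t)) /
    (s * Real.exp (b * t))

/-- The argument `A(t, s) = s·e^(bt) / (1 − s·e^(bt)·a·b^(−2v)·(Γ(2v, bt) − Γ(2v)))`. -/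
noncomputable def Afun (a b v t s : ℝ) : ℝ :=
  s * Real.exp (b * t) /
    (1 - s * Real.exp (b * t) * a * b ^ (-(2 * v)) *
      (upperGamma (2 * v) (b * t) - upperGamma (2 * v) 0))

/-- The general solution
`ω(t, s) = e^(−G(t; C(t,s)))·π(A(t, s)) + e^(−G(t; C(t,s)))·∫_0^t f(τ)·e^(G(τ; C(t,s))) dτ`. -/
noncomputable def omegaSol (a b c v : ℝ) (piT f : ℝ → ℝ) (t s : ℝ) : ℝ :=
  Real.exp (-Gfun a b c v (Cfun a b v t s) t) * piT (Afun a b v t s) +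
    Real.exp (-Gfun a b c v (Cfun a b v t s) t) *
      ∫ τ in (0 : ℝ)..t, f τ * Real.exp (Gfun a b c v (Cfun a b v t s) τ)



lemma ug_integrable {q : ℝ} (hq : 0 < q) :
    IntegrableOn (fun x : ℝ => x ^ (q - 1) * Real.exp (-x)) (Set.Ioi 0) := by
  have := Real.GammaIntegral_convergent hq
  simpa [mul_comm] using this

lemma ug_anti {q : ℝ} (hq : 0 < q) {p₁ p₂ : ℝ} (h0 : 0 ≤ p₁) (h : p₁ ≤ p₂) :
    upperGamma q p₂ ≤ upperGamma q p₁ := by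
  apply setIntegral_mono_set
  · exact (ug_integrable hq).mono_set (Set.Ioi_subset_Ioi h0)
  · filter_upwards [ae_restrict_mem measurableSet_Ioi] with x hx
    have hx0 : 0 < x := lt_of_le_of_lt h0 hx
    positivity
  · exact Filter.Eventually.of_forall (Set.Ioi_subset_Ioi h)

lemma ug_tendsto {q : ℝ} (hq : 0 < q) :
    Filter.Tendsto (fun p => upperGamma q p) (nhdsWithin 0 (Set.Ioi 0))
      (nhds (upperGamma q 0)) := by
  have hInt := ug_integrable hq
  have key : ∀ p : ℝ, 0 < p →
      upperGamma q p = upperGamma q 0 - ∫ x in Set.Ioc 0 p, x ^ (q-1) * Real.exp (-x) := by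
    intro p hp
    have hu : Set.Ioc 0 p ∪ Set.Ioi p = Set.Ioi (0:ℝ) := Set.Ioc_union_Ioi_eq_Ioi hp.le
    have hdisj : Disjoint (Set.Ioc (0:ℝ) p) (Set.Ioi p) := by
      rw [Set.disjoint_left]
      rintro x ⟨_, hxp⟩ hxp'
      exact absurd hxp' (by simpa using hxp)
    have := MeasureTheory.setIntegral_union hdisj measurableSet_Ioi
      (hInt.mono_set (by intro x hx; exact hx.1))
      (hInt.mono_set (Set.Ioi_subset_Ioi hp.le))
      (f := fun x : ℝ => x ^ (q - 1) * Real.exp (-x)) (μ := volume)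
    rw [hu] at this
    unfold upperGamma
    linarith [this]
  have hIoc : Filter.Tendsto (fun p => ∫ x in Set.Ioc (0:ℝ) p, x ^ (q-1) * Real.exp (-x))
      (nhdsWithin 0 (Set.Ioi 0)) (nhds 0) := by
    have hb : Filter.Tendsto (fun p : ℝ => p ^ q / q) (nhdsWithin 0 (Set.Ioi 0)) (nhds 0) := by
      have h1 : ContinuousAt (fun p : ℝ => p ^ q) 0 :=
        Real.continuousAt_rpow_const 0 q (Or.inr hq.le)
      have h2 : Filter.Tendsto (fun p : ℝ => p ^ q) (nhdsWithin 0 (Set.Ioi 0)) (nhds ((0:ℝ) ^ q)) :=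
        h1.tendsto.mono_left nhdsWithin_le_nhds
      have := h2.div_const q
      simpa [Real.zero_rpow hq.ne'] using this
    apply squeeze_zero'
    · filter_upwards [self_mem_nhdsWithin] with p hp
      apply setIntegral_nonneg measurableSet_Ioc
      intro x hx
      have := hx.1
      positivity
    · filter_upwards [self_mem_nhdsWithin] with p hp
      have hp : (0:ℝ) < p := hp
      have hstep : (∫ x in Set.Ioc (0:ℝ) p, x ^ (q-1) * Real.exp (-x))
          ≤ ∫ x in Set.Ioc (0:ℝ) p, x ^ (q-1) := by
        apply setIntegral_mono_on
        · exact hInt.mono_set (fun x hx => hx.1)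
        · exact (intervalIntegral.intervalIntegrable_rpow' (by linarith : (-1:ℝ) < q-1)).1
        · exact measurableSet_Ioc
        · intro x hx
          have hx0 : (0:ℝ) < x := hx.1
          have : Real.exp (-x) ≤ 1 := Real.exp_le_one_iff.2 (by linarith)
          calc x ^ (q-1) * Real.exp (-x) ≤ x ^ (q-1) * 1 := by
                apply mul_le_mul_of_nonneg_left this (Real.rpow_nonneg hx0.le _)
            _ = x ^ (q-1) := mul_one _
      have hval : (∫ x in Set.Ioc (0:ℝ) p, x ^ (q-1)) = p ^ q / q := by
        rw [← integral_of_le hp.le,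
          integral_rpow (Or.inl (by linarith : (-1:ℝ) < q-1))]
        rw [Real.zero_rpow (by linarith : q - 1 + 1 ≠ 0)]
        ring_nf
      linarith [hstep, hval.le, hval.ge]
    · exact hb
  have : Filter.Tendsto (fun p => upperGamma q 0 - ∫ x in Set.Ioc (0:ℝ) p, x ^ (q-1) * Real.exp (-x))
      (nhdsWithin 0 (Set.Ioi 0)) (nhds (upperGamma q 0)) := by
    simpa using (tendsto_const_nhds.sub hIoc)
  apply this.congr'
  filter_upwards [self_mem_nhdsWithin] with p hp
  exact (key p hp).symm

lemma Dfun_lower {a b v s : ℝ} (ha : 0 < a) (hb : 0 < b) (hv : 0 < v) (hs : 0 < s)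
    {t μ : ℝ} (ht : 0 < t) (hμ0 : 0 ≤ μ) (hμt : μ ≤ t) :
    Real.exp (-(b * t)) / s ≤ Dfun a b v (Cfun a b v t s) μ := by
  have hΓ : upperGamma (2*v) (b*t) ≤ upperGamma (2*v) (b*μ) :=
    ug_anti (by positivity) (by positivity) (by nlinarith)
  have he : (1:ℝ) ≤ Real.exp (b * μ) := Real.one_le_exp (by positivity)
  have heq : Dfun a b v (Cfun a b v t s) μ =
      Real.exp (b*μ) * (a * b ^ (-(2*v)) * (upperGamma (2*v) (b*μ) - upperGamma (2*v) (b*t)))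
        + Real.exp (b*μ) * Real.exp (-(b*t)) / s := by
    unfold Dfun Cfun
    rw [Real.exp_neg]
    field_simp
    ring
  rw [heq]
  have h1 : 0 ≤ Real.exp (b*μ) * (a * b ^ (-(2*v)) *
      (upperGamma (2*v) (b*μ) - upperGamma (2*v) (b*t))) := by
    have : 0 ≤ upperGamma (2*v) (b*μ) - upperGamma (2*v) (b*t) := by linarith
    positivity
  have h2 : Real.exp (-(b*t)) / s ≤ Real.exp (b*μ) * Real.exp (-(b*t)) / s := by
    apply div_le_div_of_nonneg_right ?_ hs.le
    nlinarith [Real.exp_pos (-(b*t))]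
  linarith

lemma Gfun_bound {a b c v s : ℝ} (ha : 0 < a) (hb : 0 < b) (hv : 0 < v) (hs : 0 < s)
    {t τ : ℝ} (ht : 0 < t) (hτ0 : 0 ≤ τ) (hτt : τ ≤ t) :
    ‖Gfun a b c v (Cfun a b v t s) τ‖ ≤ |c| * s * Real.exp (b * t) * τ := by
  have key : ∀ x ∈ Set.uIoc (0:ℝ) τ, ‖c / Dfun a b v (Cfun a b v t s) x‖
      ≤ |c| * s * Real.exp (b * t) := by
    intro x hx
    rw [Set.uIoc_of_le hτ0] at hx
    have hD := Dfun_lower ha hb hv hs ht hx.1.le (hx.2.trans hτt) (t := t)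
    have hm : (0:ℝ) < Real.exp (-(b*t)) / s := by positivity
    rw [norm_div, Real.norm_eq_abs, Real.norm_eq_abs,
      abs_of_pos (lt_of_lt_of_le hm hD)]
    calc |c| / Dfun a b v (Cfun a b v t s) x ≤ |c| / (Real.exp (-(b*t)) / s) := by
          gcongr
      _ = |c| * s * Real.exp (b * t) := by
          rw [Real.exp_neg]; field_simp
  have := intervalIntegral.norm_integral_le_of_norm_le_const key
  unfold Gfun
  calc ‖∫ μ in (0:ℝ)..τ, c / Dfun a b v (Cfun a b v t s) μ‖
      ≤ |c| * s * Real.exp (b*t) * |τ - 0| := this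
    _ = |c| * s * Real.exp (b*t) * τ := by rw [sub_zero, abs_of_nonneg hτ0]

/-- The initial-value assertion of Lemma 1: for every fixed `s > 0`,
`lim_{t → 0⁺} ω(t, s) = π(s)`. -/
theorem stmt6 (a b c v : ℝ) (ha : 0 < a) (hb : 0 < b) (hv : 0 < v)
    (piT f : ℝ → ℝ) (hπ : ContinuousOn piT (Set.Ioi 0)) (hf : ContinuousOn f (Set.Ici 0))
    (s : ℝ) (hs : 0 < s) :
    Filter.Tendsto (fun t : ℝ => omegaSol a b c v piT f t s)
      (nhdsWithin 0 (Set.Ioi 0)) (nhds (piT s)) := by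
  have h2v : 0 < 2 * v := by linarith
  have hbt : Filter.Tendsto (fun t : ℝ => b * t) (nhdsWithin 0 (Set.Ioi 0))
      (nhdsWithin 0 (Set.Ioi 0)) := by
    apply tendsto_nhdsWithin_of_tendsto_nhds_of_eventually_within
    · have : Filter.Tendsto (fun t : ℝ => b * t) (nhds 0) (nhds (b * 0)) :=
        (continuous_const.mul continuous_id).tendsto 0
      simpa using this.mono_left nhdsWithin_le_nhds
    · filter_upwards [self_mem_nhdsWithin] with t ht
      exact Set.mem_Ioi.2 (mul_pos hb ht)
  have hΓt : Filter.Tendsto (fun t => upperGamma (2*v) (b*t)) (nhdsWithin 0 (Set.Ioi 0))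
      (nhds (upperGamma (2*v) 0)) := (ug_tendsto h2v).comp hbt
  have hExpT : Filter.Tendsto (fun t : ℝ => Real.exp (b*t)) (nhdsWithin 0 (Set.Ioi 0))
      (nhds 1) := by
    have : Filter.Tendsto (fun t : ℝ => Real.exp (b*t)) (nhds 0) (nhds (Real.exp (b*0))) :=
      (Real.continuous_exp.comp (continuous_const.mul continuous_id)).tendsto 0
    simpa using this.mono_left nhdsWithin_le_nhds
  -- A(t,s) → s
  have hA : Filter.Tendsto (fun t => Afun a b v t s) (nhdsWithin 0 (Set.Ioi 0)) (nhds s) := by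
    have hnum : Filter.Tendsto (fun t => s * Real.exp (b*t)) (nhdsWithin 0 (Set.Ioi 0))
        (nhds (s * 1)) := tendsto_const_nhds.mul hExpT
    have hden : Filter.Tendsto
        (fun t => 1 - s * Real.exp (b*t) * a * b ^ (-(2*v)) *
          (upperGamma (2*v) (b*t) - upperGamma (2*v) 0)) (nhdsWithin 0 (Set.Ioi 0))
        (nhds 1) := by
      have h0 : Filter.Tendsto
          (fun t => (1:ℝ) - s * Real.exp (b*t) * a * b ^ (-(2*v)) *
            (upperGamma (2*v) (b*t) - upperGamma (2*v) 0)) (nhdsWithin 0 (Set.Ioi 0))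
          (nhds (1 - s * 1 * a * b ^ (-(2*v)) * (upperGamma (2*v) 0 - upperGamma (2*v) 0))) :=
        tendsto_const_nhds.sub
          ((((tendsto_const_nhds.mul hExpT).mul tendsto_const_nhds).mul tendsto_const_nhds).mul
            (hΓt.sub tendsto_const_nhds))
      simpa using h0
    have := hnum.div hden one_ne_zero
    unfold Afun
    simp only [mul_one, div_one] at this; exact this
  have hπA : Filter.Tendsto (fun t => piT (Afun a b v t s)) (nhdsWithin 0 (Set.Ioi 0))
      (nhds (piT s)) :=
    ((hπ.continuousAt (Ioi_mem_nhds hs)).tendsto).comp hA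
  -- G(t; C(t,s)) → 0
  have hGt : Filter.Tendsto (fun t => Gfun a b c v (Cfun a b v t s) t)
      (nhdsWithin 0 (Set.Ioi 0)) (nhds 0) := by
    apply squeeze_zero_norm' (a := fun t => |c| * s * Real.exp (b*t) * t)
    · filter_upwards [self_mem_nhdsWithin] with t ht
      exact Gfun_bound ha hb hv hs ht (le_of_lt ht) le_rfl
    · have : Filter.Tendsto (fun t : ℝ => |c| * s * Real.exp (b*t) * t) (nhds 0)
          (nhds (|c| * s * Real.exp (b*0) * 0)) := by
        exact ((continuous_const.mul (Real.continuous_exp.comp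
          (continuous_const.mul continuous_id))).mul continuous_id).tendsto 0
      simpa using this.mono_left nhdsWithin_le_nhds
  have hexpG : Filter.Tendsto (fun t => Real.exp (-Gfun a b c v (Cfun a b v t s) t))
      (nhdsWithin 0 (Set.Ioi 0)) (nhds 1) := by
    have hneg : Filter.Tendsto (fun t => -Gfun a b c v (Cfun a b v t s) t)
        (nhdsWithin 0 (Set.Ioi 0)) (nhds 0) := by simpa using hGt.neg
    have := (Real.continuous_exp.tendsto 0).comp hneg
    simpa [Function.comp_def] using this
  -- integral term → 0
  have hI : Filter.Tendsto
      (fun t => ∫ τ in (0:ℝ)..t, f τ * Real.exp (Gfun a b c v (Cfun a b v t s) τ))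
      (nhdsWithin 0 (Set.Ioi 0)) (nhds 0) := by
    obtain ⟨M, hM⟩ := (isCompact_Icc (a := (0:ℝ)) (b := 1)).exists_bound_of_continuousOn
      (hf.mono Set.Icc_subset_Ici_self)
    have hM0 : 0 ≤ M := le_trans (norm_nonneg (f 0)) (hM 0 ⟨le_rfl, zero_le_one⟩)
    set E := Real.exp (|c| * s * Real.exp b) with hE
    have hE1 : 0 < E := Real.exp_pos _
    apply squeeze_zero_norm' (a := fun t => M * E * t)
    · filter_upwards [Ioc_mem_nhdsGT_of_mem ⟨le_rfl, zero_lt_one⟩] with t ht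
      have key : ∀ τ ∈ Set.uIoc (0:ℝ) t,
          ‖f τ * Real.exp (Gfun a b c v (Cfun a b v t s) τ)‖ ≤ M * E := by
        intro τ hτ
        rw [Set.uIoc_of_le ht.1.le] at hτ
        have hτ1 : τ ≤ 1 := hτ.2.trans ht.2
        have hfτ : ‖f τ‖ ≤ M := hM τ ⟨hτ.1.le, hτ1⟩
        have hGb := Gfun_bound ha hb hv hs ht.1 hτ.1.le hτ.2 (a := a) (b := b) (c := c)
          (v := v) (s := s)
        have hGle : Gfun a b c v (Cfun a b v t s) τ ≤ |c| * s * Real.exp b := by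
          have h1 : Gfun a b c v (Cfun a b v t s) τ ≤ |c| * s * Real.exp (b*t) * τ :=
            (le_abs_self _).trans hGb
          have h2 : |c| * s * Real.exp (b*t) * τ ≤ |c| * s * Real.exp b * 1 := by
            have hbt1 : Real.exp (b*t) ≤ Real.exp b :=
              Real.exp_le_exp.2 (by nlinarith [ht.2, hb])
            have h0 : (0:ℝ) ≤ |c| * s := by positivity
            exact mul_le_mul (mul_le_mul_of_nonneg_left hbt1 h0) hτ1 hτ.1.le (by positivity)
          linarith
        have hexp : Real.exp (Gfun a b c v (Cfun a b v t s) τ) ≤ E :=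
          Real.exp_le_exp.2 hGle
        rw [norm_mul, Real.norm_eq_abs (Real.exp _), abs_of_pos (Real.exp_pos _)]
        exact mul_le_mul hfτ hexp (Real.exp_pos _).le hM0
      have := intervalIntegral.norm_integral_le_of_norm_le_const key
      calc ‖∫ τ in (0:ℝ)..t, f τ * Real.exp (Gfun a b c v (Cfun a b v t s) τ)‖
          ≤ M * E * |t - 0| := this
        _ = M * E * t := by rw [sub_zero, abs_of_pos ht.1]
    · have : Filter.Tendsto (fun t : ℝ => M * E * t) (nhds 0) (nhds (M * E * 0)) :=
        (continuous_const.mul continuous_id).tendsto 0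
      simpa using this.mono_left nhdsWithin_le_nhds
  have final := (hexpG.mul hπA).add (hexpG.mul hI)
  simpa [omegaSol] using final
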